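/- Let G be a finitely generated abelian group, let X be the space of group homomorphisms G → ℝˣ equipped with the topology of pointwise convergence (ℝˣ carrying the subspace topology from ℝ), and let D ⊆ X be the subspace of homomorphisms f such that (f g)² = 1 for every g ∈ G. Then the inclusion D ↪ X is a homotopy equivalence, and D is a finite discrete space. -/

import Mathlib

/-- The topology of pointwise convergence on `Hom(G, ℝˣ)`, with `ℝˣ` carrying the subspace
topology from `ℝ`. -/
instance groupHomRealUnitsTop {G : Type*} [CommGroup G] :
    TopologicalSpace (G →* ℝˣ) :=
  TopologicalSpace.induced (fun f => fun g => ((f g : ℝ))) Pi.topologicalSpace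

namespace RealSpecAux

/-- `x ↦ x * |x| ^ (t - 1)` as a map of real units. -/
noncomputable def phiU (t : ℝ) (x : ℝˣ) : ℝˣ :=
  Units.mk0 ((x : ℝ) * |(x : ℝ)| ^ (t - 1)) <| by
    have hx : (x : ℝ) ≠ 0 := x.ne_zero
    have h2 : (0 : ℝ) < |(x : ℝ)| ^ (t - 1) :=
      Real.rpow_pos_of_pos (abs_pos.mpr hx) _
    exact mul_ne_zero hx (ne_of_gt h2)

@[simp] lemma phiU_coe (t : ℝ) (x : ℝˣ) :
    ((phiU t x : ℝˣ) : ℝ) = (x : ℝ) * |(x : ℝ)| ^ (t - 1) := rfl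

lemma phiU_one (t : ℝ) : phiU t 1 = 1 := by
  ext
  simp [phiU]

lemma phiU_mul (t : ℝ) (x y : ℝˣ) : phiU t (x * y) = phiU t x * phiU t y := by
  ext
  simp only [phiU_coe, Units.val_mul, abs_mul]
  rw [Real.mul_rpow (abs_nonneg _) (abs_nonneg _)]
  ring

lemma phiU_apply_one (x : ℝˣ) : phiU 1 x = x := by
  ext
  simp [phiU]

lemma phiU_zero_sq (x : ℝˣ) : (phiU 0 x) ^ 2 = 1 := by
  ext
  have hx : (x : ℝ) ≠ 0 := x.ne_zero
  have habs : |(x : ℝ)| ^ ((0 : ℝ) - 1) = |(x : ℝ)|⁻¹ := by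
    rw [zero_sub, Real.rpow_neg_one]
  push_cast [phiU_coe, habs]
  rw [mul_pow, inv_pow, sq_abs]
  exact mul_inv_cancel₀ (pow_ne_zero _ hx)

lemma sq_one_cases (x : ℝˣ) (hx : x ^ 2 = 1) : (x : ℝ) = 1 ∨ (x : ℝ) = -1 := by
  have hx' : (x : ℝ) * (x : ℝ) = 1 := by
    have := congrArg (Units.val) hx
    push_cast at this
    rwa [sq] at this
  exact mul_self_eq_one_iff.mp hx'

lemma phiU_zero_of_sq_one (x : ℝˣ) (hx : x ^ 2 = 1) : phiU 0 x = x := by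
  rcases sq_one_cases x hx with h | h <;>
    · ext
      simp [phiU_coe, h, zero_sub, Real.rpow_neg_one]

variable {G : Type*} [CommGroup G]

/-- `f ↦ (g ↦ f g * |f g| ^ (t-1))` as a monoid hom. -/
noncomputable def phiHom (t : ℝ) (f : G →* ℝˣ) : G →* ℝˣ where
  toFun g := phiU t (f g)
  map_one' := by simp [phiU_one]
  map_mul' x y := by simp [phiU_mul]

@[simp] lemma phiHom_apply (t : ℝ) (f : G →* ℝˣ) (g : G) :
    phiHom t f g = phiU t (f g) := rfl

lemma continuous_eval (g : G) : Continuous fun f : G →* ℝˣ => ((f g : ℝ)) := by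
  have h : Continuous fun f : G →* ℝˣ => fun g : G => ((f g : ℝ)) :=
    continuous_induced_dom
  exact (continuous_apply g).comp h

lemma continuousAt_psi {x : ℝ} (hx : x ≠ 0) (c : ℝ) :
    ContinuousAt (fun x : ℝ => x * |x| ^ c) x := by
  have h1 : ContinuousAt (fun x : ℝ => |x| ^ c) x := by
    have h := Real.continuousAt_rpow_const |x| c (Or.inl (abs_ne_zero.mpr hx))
    exact h.comp continuous_abs.continuousAt
  exact continuousAt_id.mul h1

lemma continuous_phiHom_zero : Continuous fun f : G →* ℝˣ => phiHom 0 f := by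
  apply continuous_induced_rng.2
  apply continuous_pi
  intro g
  show Continuous fun f : G →* ℝˣ => ((f g : ℝ)) * |((f g : ℝ))| ^ ((0 : ℝ) - 1)
  rw [continuous_iff_continuousAt]
  intro f
  show ContinuousAt ((fun x : ℝ => x * |x| ^ ((0 : ℝ) - 1)) ∘
    fun f : G →* ℝˣ => ((f g : ℝ))) f
  exact ContinuousAt.comp (continuousAt_psi (f g).ne_zero _)
    (continuous_eval g).continuousAt

lemma continuous_H :
    Continuous fun q : unitInterval × (G →* ℝˣ) => phiHom (q.1 : ℝ) q.2 := by
  apply continuous_induced_rng.2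
  apply continuous_pi
  intro g
  show Continuous fun q : unitInterval × (G →* ℝˣ) =>
    ((q.2 g : ℝ)) * |((q.2 g : ℝ))| ^ ((q.1 : ℝ) - 1)
  rw [continuous_iff_continuousAt]
  intro q
  have hc : Continuous fun q : unitInterval × (G →* ℝˣ) =>
      ((|((q.2 g : ℝ))|, (q.1 : ℝ) - 1) : ℝ × ℝ) :=
    (continuous_abs.comp ((continuous_eval g).comp continuous_snd)).prodMk
      ((continuous_subtype_val.comp continuous_fst).sub continuous_const)
  have h1 : ContinuousAt
      ((fun p : ℝ × ℝ => p.1 ^ p.2) ∘ fun q : unitInterval × (G →* ℝˣ) =>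
        ((|((q.2 g : ℝ))|, (q.1 : ℝ) - 1) : ℝ × ℝ)) q :=
    ContinuousAt.comp
      (Real.continuousAt_rpow _ (Or.inl (abs_ne_zero.mpr (q.2 g).ne_zero)))
      hc.continuousAt
  exact (((continuous_eval g).comp continuous_snd).continuousAt).mul h1

end RealSpecAux

open RealSpecAux in
/-- Let `G` be a finitely generated abelian group, `X` the space of group
homomorphisms `G → ℝˣ` with the pointwise-convergence topology, and `D ⊆ X` the subspace of
homomorphisms `f` with `(f g)² = 1` for all `g`. Then the inclusion `D ↪ X` is a homotopy
equivalence, and `D` is a finite discrete space. -/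
theorem real_spec_grouplike {G : Type*} [CommGroup G]
    (hfg : ∃ S : Finset G, Subgroup.closure (S : Set G) = ⊤) :
    (∃ h : ContinuousMap.HomotopyEquiv
        {f : G →* ℝˣ // ∀ g : G, (f g) ^ 2 = 1} (G →* ℝˣ),
      ∀ p : {f : G →* ℝˣ // ∀ g : G, (f g) ^ 2 = 1}, h.toFun p = p.val) ∧
    Finite {f : G →* ℝˣ // ∀ g : G, (f g) ^ 2 = 1} ∧
    DiscreteTopology {f : G →* ℝˣ // ∀ g : G, (f g) ^ 2 = 1} := by
  obtain ⟨S, hS⟩ := hfg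
  set D := {f : G →* ℝˣ // ∀ g : G, (f g) ^ 2 = 1} with hD
  -- homs agreeing on S are equal
  have key : ∀ f f' : G →* ℝˣ, (∀ s ∈ S, f s = f' s) → f = f' := by
    intro f f' h
    have hEq : Set.EqOn (⇑f) (⇑f') ((Subgroup.closure (S : Set G) : Subgroup G) : Set G) :=
      MonoidHom.eqOn_closure h
    refine MonoidHom.ext fun g => ?_
    have hg : g ∈ Subgroup.closure (S : Set G) := by
      rw [hS]; exact Subgroup.mem_top g
    exact hEq hg
  -- two elements of D agreeing approximately on S are equal
  have key2 : ∀ p q : D, (∀ s ∈ S, |((q.val s : ℝ)) - ((p.val s : ℝ))| < 1) → q = p := by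
    intro p q h
    refine Subtype.ext (key _ _ fun s hs => ?_)
    have hps := sq_one_cases _ (p.2 s)
    have hqs := sq_one_cases _ (q.2 s)
    have h' := h s hs
    ext
    rcases hps with hp | hp <;> rcases hqs with hq | hq <;> rw [hp, hq] <;>
      rw [hp, hq] at h' <;> norm_num at h'
  have cont_incl : Continuous (fun p : D => p.val) := continuous_subtype_val
  have retr_mem : ∀ f : G →* ℝˣ, ∀ g : G, ((phiHom 0 f) g) ^ 2 = 1 := fun f g =>
    phiU_zero_sq (f g)
  have retr_fix : ∀ p : D, phiHom 0 p.val = p.val := by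
    intro p
    refine MonoidHom.ext fun g => ?_
    exact phiU_zero_of_sq_one _ (p.2 g)
  refine ⟨⟨?_, ?_⟩, ?_, ?_⟩
  · -- the homotopy equivalence
    refine
      { toFun := ⟨fun p => p.val, cont_incl⟩
        invFun := ⟨fun f => ⟨phiHom 0 f, retr_mem f⟩,
          continuous_phiHom_zero.subtype_mk _⟩
        left_inv := ?_
        right_inv := ?_ }
    · have hcomp : (ContinuousMap.mk (fun f : G →* ℝˣ => (⟨phiHom 0 f, retr_mem f⟩ : D))
            (continuous_phiHom_zero.subtype_mk _)).comp
            ⟨fun p : D => p.val, cont_incl⟩ = ContinuousMap.id D :=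
        ContinuousMap.ext fun p => Subtype.ext (retr_fix p)
      rw [hcomp]
    · refine ⟨⟨⟨fun q => phiHom (q.1 : ℝ) q.2, continuous_H⟩, ?_, ?_⟩⟩
      · intro f; rfl
      · intro f
        show phiHom ((1 : unitInterval) : ℝ) f = f
        refine MonoidHom.ext fun g => ?_
        exact phiU_apply_one (f g)
  · intro p; rfl
  · -- finiteness
    have hinj : Function.Injective fun p : D => fun s : S => ((p.val s : ℝ) = 1) := by
      intro p q h
      refine Subtype.ext (key _ _ fun s hs => ?_)
      have hps := sq_one_cases _ (p.2 s)
      have hqs := sq_one_cases _ (q.2 s)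
      have h' := congrFun h ⟨s, hs⟩
      simp only [eq_iff_iff] at h'
      ext
      rcases hps with hp | hp <;> rcases hqs with hq | hq
      · rw [hp, hq]
      · exact absurd (h'.mp hp) (by rw [hq]; norm_num)
      · exact absurd (h'.mpr hq) (by rw [hp]; norm_num)
      · rw [hp, hq]
    exact Finite.of_injective _ hinj
  · -- discreteness
    rw [discreteTopology_iff_isOpen_singleton]
    intro p
    set U : Set (G →* ℝˣ) :=
      ⋂ s ∈ S, {f : G →* ℝˣ | |((f s : ℝ)) - ((p.val s : ℝ))| < 1} with hU
    have hUopen : IsOpen U := by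
      refine isOpen_biInter_finset fun s _ => ?_
      have : {f : G →* ℝˣ | |((f s : ℝ)) - ((p.val s : ℝ))| < 1} =
          (fun f : G →* ℝˣ => ((f s : ℝ))) ⁻¹' Metric.ball ((p.val s : ℝ)) 1 := by
        ext f
        simp [Metric.mem_ball, Real.dist_eq]
      rw [this]
      exact (Metric.isOpen_ball).preimage (continuous_eval s)
    have hset : (Subtype.val ⁻¹' U : Set D) = {p} := by
      ext q
      constructor
      · intro hq
        have hq' : ∀ s ∈ S, |((q.val s : ℝ)) - ((p.val s : ℝ))| < 1 := by
          intro s hs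
          have := Set.mem_iInter₂.1 hq s hs
          exact this
        exact key2 p q hq'
      · rintro rfl
        refine Set.mem_iInter₂.2 fun s hs => ?_
        simp
    have : IsOpen (Subtype.val ⁻¹' U : Set D) := hUopen.preimage continuous_subtype_val
    rwa [hset] at this
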